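/- Let ψ be the negentropy ψ(p) = Σ_i p_i log p_i, let p_t ∈ Δ([K]) with positive entries, let η > 0, and let ℓ_t ∈ ℝ^K satisfy ℓ_{t,i} > -1/η for all i. Then max over p ∈ ℝ_{≥0}^K of (⟨p_t - p, ℓ_t⟩ - (1/η)·D_ψ(p, p_t)) ≤ η·Σ_i p_{t,i}·ℓ_{t,i}². -/

import Mathlib

open Finset Real

lemma exp_quad_bound {x : ℝ} (hx : x ≤ 1) : Real.exp x ≤ 1 + x + x ^ 2 := by
  rcases le_or_gt x 0 with h | h
  · have h1 : 1 - x ≤ Real.exp (-x) := by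
      have := Real.add_one_le_exp (-x); linarith
    have hpos : (0:ℝ) < 1 - x := by linarith
    have h2 : Real.exp x ≤ 1 / (1 - x) := by
      rw [le_div_iff₀ hpos]
      have hmul : Real.exp x * (1 - x) ≤ Real.exp x * Real.exp (-x) :=
        mul_le_mul_of_nonneg_left h1 (Real.exp_pos _).le
      rwa [← Real.exp_add, add_neg_cancel, Real.exp_zero] at hmul
    calc Real.exp x ≤ 1 / (1 - x) := h2
      _ ≤ 1 + x + x ^ 2 := by
        rw [div_le_iff₀ hpos]; nlinarith
  · calc Real.exp x ≤ _ := Real.exp_bound' h.le hx zero_lt_three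
      _ ≤ 1 + x + x ^ 2 := by
        erw [Finset.sum_range_succ]
        repeat rw [Finset.sum_range_succ]
        norm_num [Nat.factorial]
        nlinarith

lemma xlog_lb {x c : ℝ} (hx : 0 ≤ x) (hc : 0 < c) : x - c ≤ x * Real.log (x / c) := by
  rcases eq_or_lt_of_le hx with h | h
  · rw [← h]; simp; linarith
  · have h1 : Real.log (c / x) ≤ c / x - 1 := Real.log_le_sub_one_of_pos (by positivity)
    have h2 : Real.log (x / c) = - Real.log (c / x) := by
      rw [← Real.log_inv]; congr 1; field_simp
    rw [h2]
    have h3 : 1 - c / x ≤ Real.log (x / c) := by rw [h2]; linarith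
    have := mul_le_mul_of_nonneg_left h3 hx
    calc x - c = x * (1 - c / x) := by field_simp
      _ ≤ x * Real.log (x / c) := this
      _ = x * -Real.log (c / x) := by rw [h2]

lemma pointwise_bound {η a x l : ℝ} (hη : 0 < η) (ha : 0 < a) (hx : 0 ≤ x)
    (hl : l > -(1/η)) :
    (a - x) * l - (1/η) * (x * Real.log (x / a) - x + a) ≤ η * (a * l ^ 2) := by
  set u := η * l with hu
  have hu1 : -u ≤ 1 := by
    have : -(1/η) * η < l * η := by
      exact mul_lt_mul_of_pos_right hl hη
    have h1 : (1/η) * η = 1 := one_div_mul_cancel hη.ne'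
    have : -1 < u := by rw [hu]; nlinarith
    linarith
  set c := a * Real.exp (-u) with hc
  have hcpos : 0 < c := by positivity
  -- key: x * log (x/a) ≥ x - c - u * x
  have key : x - c - u * x ≤ x * Real.log (x / a) := by
    rcases eq_or_lt_of_le hx with h | h
    · rw [← h]; simp; linarith
    · have h1 : x - c ≤ x * Real.log (x / c) := xlog_lb hx hcpos
      have h2 : Real.log (x / a) = Real.log (x / c) + Real.log (c / a) := by
        rw [← Real.log_mul (by positivity) (by positivity)]
        congr 1; field_simp
      have h3 : Real.log (c / a) = -u := by
        have hca : c / a = Real.exp (-u) := by rw [hc]; field_simp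
        rw [hca, Real.log_exp]
      rw [h2, h3]; nlinarith
  have hexp : c ≤ a * (1 - u + u ^ 2) := by
    have := exp_quad_bound hu1
    have h4 : Real.exp (-u) ≤ 1 - u + u ^ 2 := by
      convert this using 1; ring
    calc c = a * Real.exp (-u) := hc
      _ ≤ a * (1 - u + u ^ 2) := by nlinarith
  -- multiply goal by η
  rw [← mul_le_mul_iff_right₀ hη] at *
  have hηne : η ≠ 0 := hη.ne'
  have expand : η * ((a - x) * l - (1/η) * (x * Real.log (x / a) - x + a))
      = u * (a - x) - (x * Real.log (x / a) - x + a) := by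
    field_simp [hu]; ring
  have : η * (η * (a * l ^ 2)) = a * u ^ 2 := by rw [hu]; ring
  nlinarith [key, hexp]

/-- Stability under negentropy, losses bounded below by `-1/η`. -/
theorem negentropy_stability_lb (K : ℕ) (η : ℝ) (hη : 0 < η)
    (p ℓ : Fin K → ℝ) (hp : ∀ i, 0 < p i) (hps : ∑ i, p i = 1)
    (hℓ : ∀ i, ℓ i > -(1/η))
    (q : Fin K → ℝ) (hq : ∀ i, 0 ≤ q i) :
    (∑ i, (p i - q i) * ℓ i)
      - (1/η) * (∑ i, (q i * Real.log (q i / p i) - q i + p i))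
    ≤ η * ∑ i, p i * (ℓ i)^2 := by
  rw [mul_sum, mul_sum, ← sum_sub_distrib]
  apply Finset.sum_le_sum
  intro i _
  have := pointwise_bound hη (hp i) (hq i) (hℓ i)
  linarith [this]
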